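/- Let k be a commutative unital ring, C_∞ the free associative unital k-algebra on generators d_1, d_2, …, with S_1 = 0, S_m = ∑_{u+v=m, u,v≥1} (-1)^{u+1} d_u d_v for m ≥ 2, and δ_0 the k-linear endomorphism determined on words by δ_0(d_{i_1}⋯d_{i_k}) = ∑_{j=1}^{k} (-1)^{(i_1+1)+⋯+(i_{j-1}+1)} d_{i_1}⋯d_{i_{j-1}} S_{i_j} d_{i_{j+1}}⋯d_{i_k}. Let h be the k-linear endomorphism of C_∞ determined on words by h(1) = 0, h(d_{i_1}⋯d_{i_k}) = 0 if k = 1 or i_1 > 1, and h(d_1 d_{i_2}⋯d_{i_k}) = d_{i_2+1} d_{i_3}⋯d_{i_k} for k ≥ 2. Then (δ_0 h + h δ_0)(w) = w for every word w other than 1 and d_1, and (δ_0 h + h δ_0)(1) = 0 = (δ_0 h + h δ_0)(d_1). -/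

import Mathlib

set_option linter.unusedVariables false
set_option synthInstance.maxHeartbeats 1000000
set_option maxHeartbeats 1000000

universe u

noncomputable section

/-- The free associative unital `k`-algebra on generators `d_1, d_2, …`
(indexed by `ℕ+`), realized as the monoid algebra on the free monoid on `ℕ+`,
with `k`-basis the words `d_{i_1} ⋯ d_{i_k}`. -/
abbrev Cinf (k : Type u) [CommRing k] := MonoidAlgebra k (FreeMonoid ℕ+)

variable (k : Type u) [CommRing k]

/-- The basis word `d_{i_1} ⋯ d_{i_k}` of `C_∞`. -/
def word (w : List ℕ+) : Cinf k :=
  MonoidAlgebra.of k (FreeMonoid ℕ+) (FreeMonoid.ofList w)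

/-- `S_1 = 0` and `S_m = ∑_{u+v=m, u,v ≥ 1} (-1)^{u+1} d_u d_v` for `m ≥ 2`. -/
def Sel (m : ℕ+) : Cinf k :=
  ∑ u : Fin ((m : ℕ) - 1), ((-1 : ℤ) ^ ((u : ℕ) + 1 + 1)) •
    word k [⟨(u : ℕ) + 1, Nat.succ_pos _⟩,
            ⟨(m : ℕ) - ((u : ℕ) + 1), by have := u.isLt; omega⟩]

/-- The value of `δ_0` on the word `d_{i_1} ⋯ d_{i_k}`:
`∑_{j=1}^{k} (-1)^{(i_1+1)+⋯+(i_{j-1}+1)} d_{i_1} ⋯ d_{i_{j-1}} S_{i_j} d_{i_{j+1}} ⋯ d_{i_k}`. -/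
def deltaWord (w : List ℕ+) : Cinf k :=
  ∑ j : Fin w.length,
    ((-1 : ℤ) ^ (∑ t : Fin (j : ℕ), ((w.get ⟨(t : ℕ), Nat.lt_trans t.isLt j.isLt⟩ : ℕ) + 1))) •
      (word k (w.take (j : ℕ)) * Sel k (w.get j) * word k (w.drop ((j : ℕ) + 1)))

/-- The `k`-linear endomorphism `δ_0` of `C_∞`, determined on words by `deltaWord`. -/
def delta0 : Cinf k →ₗ[k] Cinf k :=
  (Finsupp.lift (Cinf k) k (FreeMonoid ℕ+)) (fun w => deltaWord k w.toList) ∘ₗ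
    (MonoidAlgebra.coeffLinearEquiv k).toLinearMap

/-- The value of `h` on words: `h(1) = 0`, `h(d_{i_1}⋯d_{i_k}) = 0` if `k = 1` or
`i_1 > 1`, and `h(d_1 d_{i_2} ⋯ d_{i_k}) = d_{i_2+1} d_{i_3} ⋯ d_{i_k}`. -/
def hWord : List ℕ+ → Cinf k
  | [] => 0
  | [_] => 0
  | (i :: j :: w) => if i = 1 then word k ((j + 1) :: w) else 0

/-- The `k`-linear endomorphism `h` of `C_∞`, determined on words by `hWord`. -/
def hmap : Cinf k →ₗ[k] Cinf k :=
  (Finsupp.lift (Cinf k) k (FreeMonoid ℕ+)) (fun w => hWord k w.toList) ∘ₗ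
    (MonoidAlgebra.coeffLinearEquiv k).toLinearMap

/-- The bidegree of a word: `d_{i_1}⋯d_{i_k}` has bidegree `(-∑ i_j, k - ∑ i_j)`. -/
def wordDeg (w : List ℕ+) : ℤ × ℤ :=
  (-(w.map (fun i => ((i : ℕ) : ℤ))).sum,
    (w.length : ℤ) - (w.map (fun i => ((i : ℕ) : ℤ))).sum)

/-- `x ∈ C_∞` is homogeneous of bidegree `(p,q)`: every word in its support has
bidegree `(p,q)`. -/
def IsHomog (p q : ℤ) (x : Cinf k) : Prop :=
  ∀ w ∈ (x.coeff : FreeMonoid ℕ+ →₀ k).support, wordDeg w.toList = (p, q)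

end

noncomputable section basics
variable (k : Type u) [CommRing k]

lemma word_nil : word k [] = 1 := map_one (MonoidAlgebra.of k (FreeMonoid ℕ+))

lemma word_append (a b : List ℕ+) : word k (a ++ b) = word k a * word k b := by
  simp only [word, ← map_mul]
  rfl

lemma word_cons (i : ℕ+) (w : List ℕ+) : word k (i :: w) = word k [i] * word k w := by
  rw [← word_append]; rfl

lemma delta0_word (w : List ℕ+) : delta0 k (word k w) = deltaWord k w := by
  rw [delta0, word, MonoidAlgebra.of_apply]
  erw [Finsupp.lift_apply, Finsupp.sum_single_index (by simp)]
  simp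

lemma hmap_word (w : List ℕ+) : hmap k (word k w) = hWord k w := by
  rw [hmap, word, MonoidAlgebra.of_apply]
  erw [Finsupp.lift_apply, Finsupp.sum_single_index (by simp)]
  simp

lemma ext_words (f g : Cinf k →ₗ[k] Cinf k)
    (H : ∀ u : List ℕ+, f (word k u) = g (word k u)) : f = g := by
  apply MonoidAlgebra.lhom_ext'
  intro a
  apply LinearMap.ext_ring
  have : (MonoidAlgebra.lsingle a : k →ₗ[k] _) (1:k) = word k a.toList := by
    simp [word, MonoidAlgebra.of_apply]
  simpa [this] using H a.toList

lemma hWord_not_one (m : ℕ+) (hm : m ≠ 1) (u : List ℕ+) : hWord k (m :: u) = 0 := by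
  cases u <;> simp [hWord, hm]

lemma hmap_word_mul (m : ℕ+) (hm : m ≠ 1) (x : Cinf k) :
    hmap k (word k [m] * x) = 0 := by
  have := ext_words k ((hmap k) ∘ₗ (LinearMap.mulLeft k (word k [m]))) 0 (fun u => by
    simp only [LinearMap.comp_apply, LinearMap.mulLeft_apply, LinearMap.zero_apply,
      ← word_cons, hmap_word, hWord_not_one k m hm])
  exact LinearMap.congr_fun this x

lemma hmap_one_word_mul (j : ℕ+) (x : Cinf k) :
    hmap k (word k [1] * (word k [j] * x)) = word k [j+1] * x := by
  have := ext_words k ((hmap k) ∘ₗ (LinearMap.mulLeft k (word k [1]) ∘ₗ LinearMap.mulLeft k (word k [j])))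
    (LinearMap.mulLeft k (word k [j+1])) (fun u => by
      simp only [LinearMap.comp_apply, LinearMap.mulLeft_apply, ← word_cons, hmap_word]
      simp [hWord])
  exact LinearMap.congr_fun this x

end basics
noncomputable section recur
variable (k : Type u) [CommRing k]

lemma deltaWord_nil : deltaWord k [] = 0 := by simp [deltaWord]

lemma Sel_one : Sel k 1 = 0 := by rw [Sel]; exact Fin.sum_univ_zero _

lemma deltaWord_cons (i : ℕ+) (w : List ℕ+) :
    deltaWord k (i :: w) =
      Sel k i * word k w +
      ((-1 : ℤ) ^ ((i:ℕ) + 1)) • (word k [i] * deltaWord k w) := by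
  rw [deltaWord]
  simp only [List.length_cons]
  rw [Fin.sum_univ_succ]
  congr 1
  · simp [word_nil]
    rw [Finset.sum_eq_zero (fun x _ => absurd x.isLt (by simp)), pow_zero, one_mul]
  · rw [deltaWord, Finset.mul_sum, Finset.smul_sum]
    apply Finset.sum_congr rfl
    intro j _
    rw [mul_smul_comm, smul_smul, ← pow_add]
    simp only [Fin.val_succ, List.take_succ_cons, List.drop_succ_cons]
    simp only [List.get_eq_getElem, List.getElem_cons_succ]
    simp only [Fin.sum_univ_succ, List.get_eq_getElem, List.getElem_cons_succ, List.getElem_cons_zero]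
    rw [word_cons]
    simp only [Fin.val_zero, Fin.val_succ, List.getElem_cons_succ, List.getElem_cons_zero, mul_assoc]
end recur
noncomputable section selh
variable (k : Type u) [CommRing k]

lemma deltaWord_one_cons (w : List ℕ+) :
    deltaWord k ((1:ℕ+) :: w) = word k [1] * deltaWord k w := by
  rw [deltaWord_cons, Sel_one]
  norm_num

lemma pnat_lt (a : ℕ) (h : a < (m:ℕ+)) (ha : 0 < a) : (⟨a, ha⟩ : ℕ+) < m := by
  exact h

lemma Sel_eq (m : ℕ+) : Sel k m =
    ∑ u ∈ Finset.range ((m:ℕ) - 1),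
      ((-1:ℤ)^u) • word k [(⟨u+1, Nat.succ_pos u⟩ : ℕ+), m - ⟨u+1, Nat.succ_pos u⟩] := by
  rw [Sel, ← Fin.sum_univ_eq_sum_range (fun u => ((-1:ℤ)^u) •
      word k [(⟨u+1, Nat.succ_pos u⟩ : ℕ+), m - ⟨u+1, Nat.succ_pos u⟩]) ((m:ℕ)-1)]
  apply Finset.sum_congr rfl
  intro u _
  have hu := u.isLt
  have hs : ((-1:ℤ)^((u:ℕ)+1+1)) = (-1)^(u:ℕ) := by rw [pow_succ, pow_succ]; ring
  rw [hs]
  congr 4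
  apply PNat.coe_injective
  erw [PNat.sub_coe, if_pos (pnat_lt _ (by omega) _)]
  rfl

lemma Sel_mul_word (m : ℕ+) (rest : List ℕ+) : Sel k m * word k rest =
    ∑ u ∈ Finset.range ((m:ℕ) - 1),
      ((-1:ℤ)^u) • word k ((⟨u+1, Nat.succ_pos u⟩ : ℕ+) :: (m - ⟨u+1, Nat.succ_pos u⟩) :: rest) := by
  rw [Sel_eq, Finset.sum_mul]
  apply Finset.sum_congr rfl
  intro u _
  rw [smul_mul_assoc, ← word_append]
  rfl

lemma hmap_Sel_mul (m : ℕ+) (hm : 2 ≤ (m:ℕ)) (rest : List ℕ+) :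
    hmap k (Sel k m * word k rest) = word k (m :: rest) := by
  rw [Sel_mul_word, map_sum]
  rw [Finset.sum_eq_single_of_mem 0 (by simp; omega)]
  · rw [map_zsmul, hmap_word]
    have h1 : ((⟨0+1, Nat.succ_pos 0⟩ : ℕ+)) = 1 := rfl
    rw [h1]
    simp only [hWord, if_true, pow_zero, one_smul]
    refine (if_pos rfl).trans ?_
    congr 2
    apply PNat.coe_injective
    have hlt : (1:ℕ+) < m := by rw [← PNat.coe_lt_coe]; simp only [PNat.one_coe]; omega
    erw [PNat.add_coe, PNat.sub_coe, if_pos hlt]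
    show (m:ℕ) - 1 + 1 = (m:ℕ)
    omega
  · intro u _ hu
    erw [map_zsmul, hmap_word, hWord_not_one, smul_zero]
    intro hcontra
    have := congrArg (PNat.val) hcontra
    simp at this
    exact hu this

end selh
noncomputable section main
variable (k : Type u) [CommRing k]

lemma hmap_one_Sel_mul (j : ℕ+) (rest : List ℕ+) :
    hmap k (word k [1] * (Sel k j * word k rest)) =
    ∑ u ∈ Finset.range ((j:ℕ) - 1),
      ((-1:ℤ)^u) • word k ((⟨u+2, Nat.succ_pos _⟩ : ℕ+) :: (j - ⟨u+1, Nat.succ_pos u⟩) :: rest) := by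
  rw [Sel_mul_word, Finset.mul_sum, map_sum]
  apply Finset.sum_congr rfl
  intro u _
  rw [mul_smul_comm, ← word_cons, map_zsmul, hmap_word]
  have h1 : (⟨u+1, Nat.succ_pos u⟩ : ℕ+) + 1 = (⟨u+2, Nat.succ_pos _⟩ : ℕ+) := by
    apply PNat.coe_injective
    erw [PNat.add_coe]
  simp [hWord]
  rfl

lemma key_sum (j : ℕ+) (rest : List ℕ+) :
    Sel k (j+1) * word k rest +
    (∑ u ∈ Finset.range ((j:ℕ) - 1),
      ((-1:ℤ)^u) • word k ((⟨u+2, Nat.succ_pos _⟩ : ℕ+) :: (j - ⟨u+1, Nat.succ_pos u⟩) :: rest))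
    = word k (1 :: j :: rest) := by
  have hjp : 0 < (j:ℕ) := j.pos
  rw [Sel_mul_word]
  have hj : (((j+1:ℕ+)):ℕ) - 1 = ((j:ℕ) - 1) + 1 := by
    rw [PNat.add_coe]
    simp only [PNat.one_coe]
    omega
  rw [hj, Finset.sum_range_succ']
  have hf0 : ((-1:ℤ)^(0:ℕ)) • word k ((⟨0+1, Nat.succ_pos 0⟩ : ℕ+) :: ((j+1) - ⟨0+1, Nat.succ_pos 0⟩) :: rest)
      = word k (1 :: j :: rest) := by
    rw [pow_zero, one_smul]
    congr 2
    simp only [List.cons.injEq, and_true]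
    apply PNat.coe_injective
    erw [PNat.sub_coe, if_pos]
    · rw [PNat.add_coe]
      simp only [PNat.one_coe, PNat.mk_coe]
      omega
    · erw [← PNat.coe_lt_coe, PNat.add_coe]
      simp only [PNat.one_coe, PNat.mk_coe]
      omega
  rw [hf0, add_right_comm, add_eq_right, ← Finset.sum_add_distrib]
  apply Finset.sum_eq_zero
  intro u hu
  rw [Finset.mem_range] at hu
  have h2 : word k ((⟨u+1+1, Nat.succ_pos _⟩ : ℕ+) :: (j + 1 - ⟨u+1+1, Nat.succ_pos _⟩) :: rest)
      = word k ((⟨u+2, Nat.succ_pos _⟩ : ℕ+) :: (j - ⟨u+1, Nat.succ_pos u⟩) :: rest) := by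
    congr 2
    simp only [List.cons.injEq, and_true]
    apply PNat.coe_injective
    have hl1c : ((⟨u+1+1, Nat.succ_pos _⟩ : ℕ+) : ℕ) < ((j + 1 : ℕ+) : ℕ) := by
      rw [PNat.add_coe]
      simp only [PNat.one_coe, PNat.mk_coe]
      omega
    have hl1 := (PNat.coe_lt_coe _ _).mp hl1c
    have hl2 : (⟨u+1, Nat.succ_pos u⟩ : ℕ+) < j := by
      erw [← PNat.coe_lt_coe]
      simp only [PNat.mk_coe]
      omega
    erw [PNat.sub_coe, if_pos hl1, PNat.sub_coe, if_pos hl2, PNat.add_coe]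
    simp only [PNat.one_coe, PNat.mk_coe]
    omega
  rw [h2, pow_succ, ← add_smul]
  have hz : ((-1:ℤ)^u * (-1) + (-1:ℤ)^u) = 0 := by ring
  rw [hz, zero_smul]

theorem aux_main (k : Type u) [CommRing k] :
    (∀ w : List ℕ+, w ≠ [] → w ≠ [1] →
      delta0 k (hmap k (word k w)) + hmap k (delta0 k (word k w)) = word k w) ∧
    delta0 k (hmap k (word k [])) + hmap k (delta0 k (word k [])) = 0 ∧
    delta0 k (hmap k (word k [1])) + hmap k (delta0 k (word k [1])) = 0 := by
  refine ⟨?_, ?_, ?_⟩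
  · intro w hne hne1
    match w with
    | [] => exact absurd rfl hne
    | i :: rest' =>
      by_cases hi : i = 1
      · subst hi
        match rest' with
        | [] => exact absurd rfl hne1
        | j :: rest =>
          rw [hmap_word]
          simp only [hWord, if_true]
          rw [delta0_word, delta0_word, deltaWord_one_cons, deltaWord_cons k j rest,
            mul_add, map_add, mul_smul_comm, map_zsmul, hmap_one_Sel_mul,
            hmap_one_word_mul, deltaWord_cons k (j+1) rest]
          have hs : (((j+1:ℕ+)):ℕ) + 1 = ((j:ℕ)+1)+1 := by
            simp [PNat.add_coe, PNat.one_coe]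
          rw [hs, pow_succ, add_add_add_comm, ← add_smul]
          have hz : ((-1:ℤ)^((j:ℕ)+1) * (-1) + (-1:ℤ)^((j:ℕ)+1)) = 0 := by ring
          rw [hz, zero_smul, add_zero]
          exact key_sum k j rest
      · have hi2 : 2 ≤ (i:ℕ) := by
          rcases i with ⟨i, hi0⟩
          have : i ≠ 1 := fun h => hi (by apply PNat.coe_injective; simpa using h)
          simpa using by omega
        rw [hmap_word, hWord_not_one k i hi, map_zero, zero_add, delta0_word,
          deltaWord_cons, map_add, map_zsmul, hmap_Sel_mul k i hi2,
          hmap_word_mul k i hi, smul_zero, add_zero]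
  · simp [hmap_word, delta0_word, deltaWord_nil, hWord]
  · simp [hmap_word, delta0_word, deltaWord_cons, deltaWord_nil, Sel_one, hWord]
end main


/-- `(δ_0 h + h δ_0)(w) = w` for every word `w` other than `1` and `d_1`,
and `(δ_0 h + h δ_0)(1) = 0 = (δ_0 h + h δ_0)(d_1)`. -/
theorem delta0_h_homotopy (k : Type u) [CommRing k] :
    (∀ w : List ℕ+, w ≠ [] → w ≠ [1] →
      delta0 k (hmap k (word k w)) + hmap k (delta0 k (word k w)) = word k w) ∧
    delta0 k (hmap k (word k [])) + hmap k (delta0 k (word k [])) = 0 ∧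
    delta0 k (hmap k (word k [1])) + hmap k (delta0 k (word k [1])) = 0 := by
  exact aux_main k
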